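/- Let n, k, s be positive integers with k ≤ n, and let S ⊆ Gr(k,n) be a finite set of subspaces whose pairwise chordal distances take at most s distinct nonzero values a_1, …, a_s. Then |S| is at most the dimension of the space of polynomial functions of degree ≤ s on the variety of rank-k orthogonal projection matrices, i.e., |S| ≤ dim(ℝ[X]_{≤s} / (ℝ[X]_{≤s} ∩ I_{k,n})), where I_{k,n} = ⟨tr(X) − k, X² − X⟩ ⊆ ℝ[x_{i,j} : 1 ≤ i ≤ j ≤ n]. -/

import Mathlib

open Matrix MvPolynomial Real

/-- Index type for the entries `x_{i,j}`, `1 ≤ i ≤ j ≤ n`, of the generic symmetric matrix. -/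
def SymIdx (n : ℕ) : Type := {q : Fin n × Fin n // q.1 ≤ q.2}

/-- The `(i,j)` entry of the generic symmetric matrix, as a polynomial variable. -/
noncomputable def symVar (n : ℕ) (i j : Fin n) : MvPolynomial (SymIdx n) ℝ :=
  if h : i ≤ j then MvPolynomial.X ⟨(i, j), h⟩ else MvPolynomial.X ⟨(j, i), (not_le.mp h).le⟩

/-- The ideal `I_{k,n} = ⟨tr(X) − k, X² − X⟩` of the variety of rank-`k` projections. -/
noncomputable def projIdeal (n k : ℕ) : Ideal (MvPolynomial (SymIdx n) ℝ) :=
  Ideal.span (insert ((∑ l, symVar n l l) - MvPolynomial.C (k : ℝ))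
    {p : MvPolynomial (SymIdx n) ℝ | ∃ i j : Fin n,
      p = (∑ l, symVar n i l * symVar n l j) - symVar n i j})

instance (n : ℕ) : Finite (SymIdx n) := Subtype.finite

/-- a set of `k`-subspaces whose pairwise chordal distances take at most `s`
distinct nonzero values `a_1, …, a_s` has cardinality at most
`dim(ℝ[X]_{≤s} / (ℝ[X]_{≤s} ∩ I_{k,n}))`, realized as the image of the polynomials of total
degree at most `s` in the quotient by `I_{k,n}`. -/
theorem stmt16 (n k s m : ℕ) (hk : 1 ≤ k) (hkn : k ≤ n) (hs : 1 ≤ s)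
    (U : Fin m → Matrix (Fin n) (Fin k) ℝ)
    (horth : ∀ i, (U i)ᵀ * U i = 1)
    (hinj : Function.Injective fun i => U i * (U i)ᵀ)
    (a : Fin s → ℝ) (ha : ∀ t, a t ≠ 0)
    (hdist : ∀ i j, i ≠ j → ∃ t,
      Real.sqrt ((k : ℝ) -
        Matrix.trace ((U i * (U i)ᵀ) * (U j * (U j)ᵀ))) = a t) :
    m ≤ Module.finrank ℝ
      (Submodule.map ((projIdeal n k).restrictScalars ℝ).mkQ
        (MvPolynomial.restrictTotalDegree (SymIdx n) ℝ s)) := by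
  classical
  set P : Fin m → Matrix (Fin n) (Fin n) ℝ := fun i => U i * (U i)ᵀ with hP
  have Psymm : ∀ i, (P i)ᵀ = P i := by
    intro i; simp [hP, Matrix.transpose_mul]
  have Pidem : ∀ i, P i * P i = P i := by
    intro i
    calc U i * (U i)ᵀ * (U i * (U i)ᵀ) = U i * ((U i)ᵀ * U i) * (U i)ᵀ := by
          simp [Matrix.mul_assoc]
      _ = U i * (U i)ᵀ := by rw [horth i, Matrix.mul_one]
  have Ptrace : ∀ i, Matrix.trace (P i) = (k : ℝ) := by
    intro i
    rw [hP]
    simp only [Matrix.trace_mul_comm (U i) (U i)ᵀ, horth i, Matrix.trace_one]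
    simp
  -- evaluation maps
  set φ : Fin m → (MvPolynomial (SymIdx n) ℝ →ₐ[ℝ] ℝ) :=
    fun j => MvPolynomial.aeval (fun q : SymIdx n => P j q.1.1 q.1.2) with hφ
  have hsymVar : ∀ j i l, φ j (symVar n i l) = P j i l := by
    intro j i l
    unfold symVar
    split_ifs with h
    · exact aeval_X _ _
    · simp only [hφ, aeval_X]
      conv_rhs => rw [← Psymm j]
      exact aeval_X _ _
  -- the polynomials
  set p : Fin m → MvPolynomial (SymIdx n) ℝ := fun i =>
    ∏ t : Fin s, ((∑ l, ∑ l', MvPolynomial.C (P i l l') * symVar n l l')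
      + MvPolynomial.C (a t ^ 2 - k)) with hp
  have hdeg : ∀ i, (p i).totalDegree ≤ s := by
    intro i
    refine (MvPolynomial.totalDegree_finset_prod _ _).trans ?_
    have h1 : ∀ t : Fin s, ((∑ l, ∑ l', MvPolynomial.C (P i l l') * symVar n l l')
        + MvPolynomial.C (a t ^ 2 - k)).totalDegree ≤ 1 := by
      intro t
      refine (MvPolynomial.totalDegree_add _ _).trans ?_
      refine max_le ?_ (by rw [MvPolynomial.totalDegree_C]; exact Nat.zero_le 1)
      refine (MvPolynomial.totalDegree_finset_sum _ _).trans (Finset.sup_le ?_)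
      intro l _
      refine (MvPolynomial.totalDegree_finset_sum _ _).trans (Finset.sup_le ?_)
      intro l' _
      refine (MvPolynomial.totalDegree_mul _ _).trans ?_
      have : (symVar n l l').totalDegree ≤ 1 := by
        unfold symVar; split_ifs <;> exact (MvPolynomial.totalDegree_X _).le
      simpa [MvPolynomial.totalDegree_C] using this
    calc ∑ t : Fin s, ((∑ l, ∑ l', MvPolynomial.C (P i l l') * symVar n l l')
        + MvPolynomial.C (a t ^ 2 - k)).totalDegree ≤ ∑ _t : Fin s, 1 :=
          Finset.sum_le_sum fun t _ => h1 t
      _ = s := by simp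
  have trace_eq : ∀ i j, Matrix.trace (P i * P j) = ∑ l, ∑ l', P i l l' * P j l l' := by
    intro i j
    rw [Matrix.trace]
    simp only [Matrix.diag, Matrix.mul_apply]
    refine Finset.sum_congr rfl fun l _ => Finset.sum_congr rfl fun l' _ => ?_
    congr 1
    conv_lhs => rw [← Psymm j]
    rfl
  have hφC : ∀ j r, φ j (MvPolynomial.C r) = r := by
    intro j r; simp [hφ]
  have key : ∀ i j, φ j (p i) = ∏ t : Fin s, (Matrix.trace (P i * P j) + (a t ^ 2 - k)) := by
    intro i j
    rw [hp]
    simp only [map_prod, map_add, map_sum, _root_.map_mul, hφC, hsymVar]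
    exact Finset.prod_congr rfl fun t _ => by rw [trace_eq i j]
  -- φ j kills the ideal
  have hker : ∀ j, (projIdeal n k).restrictScalars ℝ ≤ LinearMap.ker (φ j).toLinearMap := by
    intro j x hx
    have hx' : x ∈ projIdeal n k := hx
    have hgen : projIdeal n k ≤ RingHom.ker (φ j).toRingHom := by
      rw [projIdeal, Ideal.span_le]
      rintro q (rfl | ⟨i0, j0, rfl⟩)
      · simp only [SetLike.mem_coe, RingHom.mem_ker, map_sub, map_sum,
          AlgHom.toRingHom_eq_coe, RingHom.coe_coe, hsymVar, hφC]
        rw [← Ptrace j, Matrix.trace]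
        simp [Matrix.diag]
      · simp only [SetLike.mem_coe, RingHom.mem_ker, map_sub, map_sum, _root_.map_mul,
          AlgHom.toRingHom_eq_coe, RingHom.coe_coe, hsymVar]
        have : ∑ l, P j i0 l * P j l j0 = (P j * P j) i0 j0 := (Matrix.mul_apply).symm
        rw [this, Pidem j, sub_self]
    exact LinearMap.mem_ker.mpr (hgen hx')
  set I := (projIdeal n k).restrictScalars ℝ with hI
  set M := Submodule.map I.mkQ (MvPolynomial.restrictTotalDegree (SymIdx n) ℝ s) with hM
  set ψ : Fin m → ((MvPolynomial (SymIdx n) ℝ ⧸ I) →ₗ[ℝ] ℝ) :=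
    fun j => Submodule.liftQ I (φ j).toLinearMap (hker j) with hψ
  have hψmk : ∀ j q, ψ j (I.mkQ q) = φ j q := by
    intro j q; simp [hψ, Submodule.mkQ_apply]
  -- the elements
  have hmem : ∀ i, I.mkQ (p i) ∈ M := by
    intro i
    exact ⟨p i, (MvPolynomial.mem_restrictTotalDegree _ _ _).mpr (hdeg i), rfl⟩
  set w : Fin m → M := fun i => ⟨I.mkQ (p i), hmem i⟩ with hw
  have hφpj : ∀ j, φ j (p j) = ∏ t : Fin s, a t ^ 2 := by
    intro j
    rw [key j j, Pidem j, Ptrace j]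
    refine Finset.prod_congr rfl fun t _ => by ring
  have hφpi : ∀ i j, i ≠ j → φ j (p i) = 0 := by
    intro i j hij
    rw [key i j]
    obtain ⟨t, ht⟩ := hdist i j hij
    rw [show (U i * (U i)ᵀ * (U j * (U j)ᵀ)) = P i * P j from rfl] at ht
    refine Finset.prod_eq_zero (Finset.mem_univ t) ?_
    rcases le_or_gt 0 ((k : ℝ) - Matrix.trace (P i * P j)) with h | h
    · have h2 := Real.sq_sqrt h
      rw [ht] at h2
      linarith
    · exfalso
      rw [Real.sqrt_eq_zero_of_nonpos h.le] at ht
      exact ha t ht.symm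
  have hli : LinearIndependent ℝ w := by
    rw [Fintype.linearIndependent_iff]
    intro g hg j
    have h0 : (∑ i, g i • w i : M) = 0 := hg
    have h1 : (∑ i, g i • I.mkQ (p i)) = (0 : MvPolynomial (SymIdx n) ℝ ⧸ I) := by
      have := congrArg (M.subtype) h0
      simpa [hw, Submodule.coe_sum] using this
    have h2 := congrArg (ψ j) h1
    simp only [map_sum, _root_.map_smul, map_zero, hψmk, smul_eq_mul] at h2
    rw [Finset.sum_eq_single j (fun i _ hij => by rw [hφpi i j hij, mul_zero])
      (fun h => absurd (Finset.mem_univ j) h)] at h2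
    have hne : φ j (p j) ≠ 0 := by
      rw [hφpj j]
      exact Finset.prod_ne_zero_iff.mpr fun t _ => pow_ne_zero 2 (ha t)
    exact (mul_eq_zero.mp h2).resolve_right hne
  have : Fintype.card (Fin m) ≤ Module.finrank ℝ M := hli.fintype_card_le_finrank
  simpa using this
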